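/- Theorem 3.2(2): Let p = 2, R = F_2 + vF_2 with v^2 = v, and let k₁, k₂, k₃, n be natural numbers with k = k₁ + k₂ + k₃ ≤ n. Let A (size k₁×k₂), B (k₁×k₃), D₁, D₂ (k₁×(n−k)), C₁ (k₂×(n−k)), E (k₃×(n−k)) be matrices over F_2, regarded as matrices over R via c ↦ (c,c). Let C be the R-submodule of R^n generated by the rows of the block matrix G with column blocks of sizes k₁, k₂, k₃, n−k and row blocks of sizes k₁, k₂, k₃: G = [ I_{k₁} | A | B | D₁+vD₂ ; 0 | vI_{k₂} | 0 | vC₁ ; 0 | 0 | (1+v)I_{k₃} | (1+v)E ]. Then the dual code C^⊥ equals the R-submodule of R^n generated by the rows of the block matrix H with column blocks of sizes k₁, k₂, k₃, n−k and row blocks of sizes n−k, k₃, k₂: H = [ EᵀBᵀ + C₁ᵀAᵀ + (D₁+vD₂)ᵀ | C₁ᵀ | Eᵀ | I_{n−k} ; vBᵀ | 0 | vI_{k₃} | 0 ; (1+v)Aᵀ | (1+v)I_{k₂} | 0 | 0 ]. -/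

import Mathlib

open Matrix

/-- The Euclidean dual of a linear code. -/
def dualCode {S : Type*} [CommRing S] {ι : Type*} [Fintype ι]
    (C : Submodule S (ι → S)) : Submodule S (ι → S) where
  carrier := {u | ∀ w ∈ C, ∑ i, u i * w i = 0}
  zero_mem' := by intro w hw; simp
  add_mem' := by
    intro a b ha hb w hw
    simp only [Set.mem_setOf_eq] at ha hb ⊢
    simp only [Pi.add_apply, add_mul, Finset.sum_add_distrib, ha w hw, hb w hw, add_zero]
  smul_mem' := by
    intro c a ha w hw
    simp only [Set.mem_setOf_eq] at ha ⊢
    simp only [Pi.smul_apply, smul_eq_mul, mul_assoc, ← Finset.mul_sum, ha w hw, mul_zero]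

/-- `F_2 → R = F_2 × F_2`, `c ↦ (c, c)`. -/
def eR : ZMod 2 → ZMod 2 × ZMod 2 := fun c => (c, c)

/-- `v = (0, 1)`. -/
def vR : ZMod 2 × ZMod 2 := (0, 1)

variable {k₁ k₂ k₃ r : ℕ}
  (A : Matrix (Fin k₁) (Fin k₂) (ZMod 2)) (B : Matrix (Fin k₁) (Fin k₃) (ZMod 2))
  (D₁ D₂ : Matrix (Fin k₁) (Fin r) (ZMod 2)) (C₁ : Matrix (Fin k₂) (Fin r) (ZMod 2))
  (E : Matrix (Fin k₃) (Fin r) (ZMod 2))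

/-- The generator matrix
`G = [ I | A | B | D₁+vD₂ ; 0 | vI | 0 | vC₁ ; 0 | 0 | (1+v)I | (1+v)E ]` over
`R = F_2 + vF_2`, with column blocks of sizes `k₁, k₂, k₃, n−k` (here `r = n − k`)
and row blocks of sizes `k₁, k₂, k₃`. -/
def Gmat : Matrix (Fin k₁ ⊕ Fin k₂ ⊕ Fin k₃)
    (Fin k₁ ⊕ Fin k₂ ⊕ Fin k₃ ⊕ Fin r) (ZMod 2 × ZMod 2) :=
  Matrix.of fun row c =>
    match row, c with
    | .inl i, .inl j => if i = j then 1 else 0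
    | .inl i, .inr (.inl j) => eR (A i j)
    | .inl i, .inr (.inr (.inl j)) => eR (B i j)
    | .inl i, .inr (.inr (.inr j)) => eR (D₁ i j) + vR * eR (D₂ i j)
    | .inr (.inl _), .inl _ => 0
    | .inr (.inl i), .inr (.inl j) => if i = j then vR else 0
    | .inr (.inl _), .inr (.inr (.inl _)) => 0
    | .inr (.inl i), .inr (.inr (.inr j)) => vR * eR (C₁ i j)
    | .inr (.inr _), .inl _ => 0
    | .inr (.inr _), .inr (.inl _) => 0
    | .inr (.inr i), .inr (.inr (.inl j)) => if i = j then 1 + vR else 0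
    | .inr (.inr i), .inr (.inr (.inr j)) => (1 + vR) * eR (E i j)

/-- The parity check matrix
`H = [ EᵀBᵀ + C₁ᵀAᵀ + (D₁+vD₂)ᵀ | C₁ᵀ | Eᵀ | I ; vBᵀ | 0 | vI | 0 ;
  (1+v)Aᵀ | (1+v)I | 0 | 0 ]`, with column blocks of sizes `k₁, k₂, k₃, n−k` and row
blocks of sizes `n−k, k₃, k₂`. -/
def Hmat : Matrix (Fin r ⊕ Fin k₃ ⊕ Fin k₂)
    (Fin k₁ ⊕ Fin k₂ ⊕ Fin k₃ ⊕ Fin r) (ZMod 2 × ZMod 2) :=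
  Matrix.of fun row c =>
    match row, c with
    | .inl s, .inl j => eR ((Eᵀ * Bᵀ + C₁ᵀ * Aᵀ + D₁ᵀ) s j) + vR * eR (D₂ᵀ s j)
    | .inl s, .inr (.inl j) => eR (C₁ᵀ s j)
    | .inl s, .inr (.inr (.inl j)) => eR (Eᵀ s j)
    | .inl s, .inr (.inr (.inr t)) => if s = t then 1 else 0
    | .inr (.inl i), .inl j => vR * eR (Bᵀ i j)
    | .inr (.inl _), .inr (.inl _) => 0
    | .inr (.inl i), .inr (.inr (.inl j)) => if i = j then vR else 0
    | .inr (.inl _), .inr (.inr (.inr _)) => 0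
    | .inr (.inr i), .inl j => (1 + vR) * eR (Aᵀ i j)
    | .inr (.inr i), .inr (.inl j) => if i = j then 1 + vR else 0
    | .inr (.inr _), .inr (.inr _) => 0

lemma mem_dual_span_iff {S : Type*} [CommRing S] {ι κ : Type*} [Fintype ι]
    (f : κ → (ι → S)) (u : ι → S) :
    u ∈ dualCode (Submodule.span S (Set.range f)) ↔ ∀ k, ∑ i, u i * f k i = 0 := by
  constructor
  · intro h k; exact h (f k) (Submodule.subset_span ⟨k, rfl⟩)
  · intro h w hw
    induction hw using Submodule.span_induction with
    | mem w hw => obtain ⟨k, rfl⟩ := hw; exact h k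
    | zero => simp
    | add a b _ _ ha hb =>
        simp only [Pi.add_apply, mul_add, Finset.sum_add_distrib, ha, hb, add_zero]
    | smul c a _ ha =>
        simp only [Pi.smul_apply, smul_eq_mul]
        rw [Finset.sum_congr rfl fun i _ => mul_left_comm _ c _, ← Finset.mul_sum, ha, mul_zero]


set_option maxHeartbeats 1000000 in
/-- Theorem 3.2(2): for `p = 2`, the dual of the code generated by the rows of `G` is the
code generated by the rows of `H`; i.e. `H` is a generator matrix for `C^⊥` (and hence a
parity check matrix for `C`). -/
theorem dual_of_code_gen_by_G_char_two :
    dualCode (Submodule.span (ZMod 2 × ZMod 2)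
        (Set.range fun row j => Gmat A B D₁ D₂ C₁ E row j)) =
      Submodule.span (ZMod 2 × ZMod 2)
        (Set.range fun row j => Hmat A B D₁ D₂ C₁ E row j) := by
  apply le_antisymm
  · intro u hu
    rw [mem_dual_span_iff] at hu
    rw [show (Set.range fun row j => Hmat A B D₁ D₂ C₁ E row j)
        = Set.range (Hmat A B D₁ D₂ C₁ E).row from rfl, ← range_vecMulLinear]
    have h1 := fun i => hu (.inl i)
    have h2 := fun i => hu (.inr (.inl i))
    have h3 := fun i => hu (.inr (.inr i))
    simp only [Gmat, Matrix.of_apply, Fintype.sum_sum_type, Prod.ext_iff,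
      Prod.fst_sum, Prod.snd_sum, Prod.fst_add, Prod.snd_add, Prod.fst_mul, Prod.snd_mul,
      eR, vR, apply_ite Prod.fst, apply_ite Prod.snd, Prod.fst_zero, Prod.snd_zero, Prod.fst_one,
      Prod.snd_one, one_mul, zero_mul, mul_one, mul_zero, add_zero, zero_add, mul_ite, ite_mul,
      Finset.sum_ite_eq, Finset.sum_ite_eq', Finset.mem_univ, if_true, Finset.sum_const_zero,
      and_self, true_and, and_true, show (1:ZMod 2)+1 = 0 from rfl] at h1 h2 h3
    have e1f : ∀ i, (u (.inl i)).1
        = ∑ x, (u (.inr (.inl x))).1 * A i x +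
            (∑ x, (u (.inr (.inr (.inl x)))).1 * B i x +
              ∑ x, (u (.inr (.inr (.inr x)))).1 * D₁ i x) := fun i => by
      rw [← neg_eq_of_add_eq_zero_left (h1 i).1, CharTwo.neg_eq]
    have e1s : ∀ i, (u (.inl i)).2
        = ∑ x, (u (.inr (.inl x))).2 * A i x +
            (∑ x, (u (.inr (.inr (.inl x)))).2 * B i x +
              ∑ x, (u (.inr (.inr (.inr x)))).2 * (D₁ i x + D₂ i x)) := fun i => by
      rw [← neg_eq_of_add_eq_zero_left (h1 i).2, CharTwo.neg_eq]
    have e2 : ∀ i, (u (.inr (.inl i))).2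
        = ∑ x, (u (.inr (.inr (.inr x)))).2 * C₁ i x := fun i => by
      rw [← neg_eq_of_add_eq_zero_left (h2 i), CharTwo.neg_eq]
    have e3 : ∀ i, (u (.inr (.inr (.inl i)))).1
        = ∑ x, (u (.inr (.inr (.inr x)))).1 * E i x := fun i => by
      rw [← neg_eq_of_add_eq_zero_left (h3 i), CharTwo.neg_eq]
    refine ⟨Sum.elim (fun s => u (.inr (.inr (.inr s))))
      (Sum.elim
        (fun j => u (.inr (.inr (.inl j))) + ∑ s, eR (E j s) * u (.inr (.inr (.inr s))))
        (fun j => u (.inr (.inl j)) + ∑ s, eR (C₁ j s) * u (.inr (.inr (.inr s))))), ?_⟩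
    rw [Matrix.vecMulLinear_apply]
    funext t
    rcases t with t | t | t | t <;>
      simp only [Matrix.vecMul, dotProduct, Fintype.sum_sum_type, Sum.elim_inl,
        Sum.elim_inr, Hmat, Matrix.of_apply, Prod.ext_iff,
        Prod.fst_sum, Prod.snd_sum, Prod.fst_add, Prod.snd_add, Prod.fst_mul, Prod.snd_mul,
        eR, vR, apply_ite Prod.fst, apply_ite Prod.snd, Prod.fst_zero, Prod.snd_zero,
        Prod.fst_one, Prod.snd_one, one_mul, zero_mul, mul_one, mul_zero, add_zero, zero_add,
        mul_ite, ite_mul, Finset.sum_ite_eq, Finset.sum_ite_eq', Finset.mem_univ, if_true,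
        Finset.sum_const_zero, and_self, true_and, and_true, Matrix.mul_apply, Matrix.add_apply,
        Matrix.transpose_apply, show (1:ZMod 2)+1 = 0 from rfl]
    · -- column 1
      refine ⟨?_, ?_⟩
      · rw [e1f t]
        simp only [e3, mul_add, add_mul, Finset.sum_add_distrib, Finset.mul_sum, Finset.sum_mul,
          mul_comm (C₁ _ _) (Prod.fst _), mul_comm (E _ _) (Prod.fst _)]
        rw [Finset.sum_comm (f := fun x y => (u (.inr (.inr (.inr x)))).1 * (E y x * B t y)),
            Finset.sum_comm (f := fun x y => (u (.inr (.inr (.inr x)))).1 * (C₁ y x * A t y))]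
        ring_nf
        simp [show (2:ZMod 2) = 0 from rfl]
      · rw [e1s t]
        simp only [e2, mul_add, add_mul, Finset.sum_add_distrib, Finset.mul_sum, Finset.sum_mul,
          mul_comm (C₁ _ _) (Prod.snd _), mul_comm (E _ _) (Prod.snd _)]
        rw [Finset.sum_comm (f := fun x y => (u (.inr (.inr (.inr x)))).2 * (E y x * B t y)),
            Finset.sum_comm (f := fun x y => (u (.inr (.inr (.inr x)))).2 * (C₁ y x * A t y))]
        ring_nf
        simp [show (2:ZMod 2) = 0 from rfl]
    · -- column 2
      refine ⟨?_, (e2 t).symm⟩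
      simp only [mul_comm (C₁ _ _) (Prod.fst _)]
      ring_nf
      simp [show (2:ZMod 2) = 0 from rfl]
    · -- column 3
      refine ⟨(e3 t).symm, ?_⟩
      simp only [mul_comm (E _ _) (Prod.snd _)]
      ring_nf
      simp [show (2:ZMod 2) = 0 from rfl]
  · rw [Submodule.span_le]
    rintro w ⟨row, rfl⟩
    rw [SetLike.mem_coe, mem_dual_span_iff]
    intro row'
    have h2 : (2 : ZMod 2) = 0 := rfl
    rcases row with s | i | i <;> rcases row' with i' | i' | i' <;>
      simp only [Hmat, Gmat, Matrix.of_apply, Fintype.sum_sum_type, Prod.ext_iff,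
        Prod.fst_sum, Prod.snd_sum, Prod.fst_add, Prod.snd_add, Prod.fst_mul, Prod.snd_mul,
        eR, vR, Matrix.mul_apply, Matrix.add_apply, Matrix.transpose_apply,
        apply_ite Prod.fst, apply_ite Prod.snd, Prod.fst_zero, Prod.snd_zero, Prod.fst_one,
        Prod.snd_one, one_mul, zero_mul, mul_one, mul_zero, add_zero, zero_add, mul_ite, ite_mul,
        Finset.sum_ite_eq, Finset.mem_univ, if_true, Finset.sum_const_zero, and_self,
        Finset.sum_ite_eq'] <;>
      first
        | rfl
        | (constructor <;> ring_nf <;> simp [h2, show (4:ZMod 2)=0 from rfl])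
        | simp [CharTwo.add_self_eq_zero]
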